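/- Let G be an m-uniform hypergraph with at least one edge, with adjacency tensor A(G) and spectral radius ρ. If G is disconnected, then the projective eigenvariety PV_ρ(A(G)) has dimension greater than zero (is infinite) if and only if G has at least two connected components, each on at least two vertices, whose spectral radius equals ρ. -/

import Mathlib

open scoped BigOperators

namespace PaperTensor

/-- A tensor of order `m` and dimension `|ι|`: entry `A i f` is `a_{i, f 0, …, f (m-2)}`. -/
abbrev Tensor (ι : Type) (m : ℕ) : Type := ι → (Fin (m - 1) → ι) → ℂ

variable {ι : Type} [Fintype ι] {m : ℕ}

/-- `(A x^{m-1})_i = ∑ a_{i i₂ … i_m} x_{i₂} ⋯ x_{i_m}`. -/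
noncomputable def tApp (A : Tensor ι m) (x : ι → ℂ) (i : ι) : ℂ :=
  ∑ f : Fin (m - 1) → ι, A i f * ∏ j, x (f j)

/-- `x ≠ 0` and `A x^{m-1} = l x^{[m-1]}`. -/
def IsEigPair (A : Tensor ι m) (l : ℂ) (x : ι → ℂ) : Prop :=
  x ≠ 0 ∧ ∀ i, tApp A x i = l * x i ^ (m - 1)

def Eigenvalues (A : Tensor ι m) : Set ℂ := {l | ∃ x, IsEigPair A l x}

/-- The spectral radius: the largest modulus of an eigenvalue. -/
noncomputable def specRad (A : Tensor ι m) : ℝ := sSup ((fun z : ℂ => ‖z‖) '' Eigenvalues A)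

/-- All entries are nonnegative reals. -/
def Nonneg (A : Tensor ι m) : Prop := ∀ i f, ∃ r : ℝ, 0 ≤ r ∧ A i f = (r : ℂ)

/-- Arc `(i,j)` of the directed graph `G(A)`. -/
def Arc (A : Tensor ι m) (i j : ι) : Prop := ∃ f, A i f ≠ 0 ∧ ∃ k, f k = j

/-- `G(A)` is strongly connected. -/
def WeaklyIrreducible (A : Tensor ι m) : Prop :=
  ∀ i j : ι, Relation.ReflTransGen (Arc A) i j

/-- The projective eigenvariety `PV_l(A) ⊆ ℙ^{n-1}`. -/
def PV (A : Tensor ι m) (l : ℂ) : Set (Projectivization ℂ (ι → ℂ)) :=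
  {p | ∃ (v : ι → ℂ) (hv : v ≠ 0), Projectivization.mk ℂ v hv = p ∧
        ∀ i, tApp A v i = l * v i ^ (m - 1)}

/-- `(D^{-(m-1)} A D)_{i₁…i_m} = d_{i₁}^{-(m-1)} a_{i₁…i_m} d_{i₂} ⋯ d_{i_m}`. -/
noncomputable def diagConj (d : ι → ℂ) (A : Tensor ι m) : Tensor ι m :=
  fun i f => (d i)⁻¹ ^ (m - 1) * A i f * ∏ j, d (f j)

/-- Combinatorial symmetry: the support is invariant under permutations of indices. -/
def CombSymm (A : Tensor ι m) : Prop :=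
  ∀ i f i' f', (i ::ₘ Multiset.map f Finset.univ.val) = (i' ::ₘ Multiset.map f' Finset.univ.val) →
    (A i f ≠ 0 ↔ A i' f' ≠ 0)

/-- Irreducibility of a tensor. -/
def Irred (A : Tensor ι m) : Prop :=
  ¬ ∃ S : Set ι, S.Nonempty ∧ S ≠ Set.univ ∧
      ∀ i ∈ S, ∀ f : Fin (m - 1) → ι, (∀ j, f j ∉ S) → A i f = 0

/-- Solid arc: `(i,j)` arising from a nonzero entry `a_{ij…j}`. -/
def SolidArc (A : Tensor ι m) (i j : ι) : Prop := A i (fun _ => j) ≠ 0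

/-- Spectral `ℓ`-symmetry: `Spec(A) = e^{2πi/ℓ} Spec(A)`. -/
def SpectralSymm (A : Tensor ι m) (ℓ : ℕ) : Prop :=
  Eigenvalues A = (fun z => Complex.exp ((2 * Real.pi / ℓ : ℝ) * Complex.I) * z) '' Eigenvalues A

/-- The set `𝔇^{(j)}(A)` (for the given `ℓ`), as diagonal matrices recorded by their diagonals. -/
def Dgj {n m : ℕ} [NeZero n] (A : Tensor (Fin n) m) (ℓ j : ℕ) : Set (Fin n → ℂ) :=
  {d | (∀ i, d i ≠ 0) ∧ d 0 = 1 ∧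
    ∀ i f, A i f = Complex.exp (-(2 * Real.pi * j / ℓ : ℝ) * Complex.I) * diagConj d A i f}

/-- The group `𝔇(A) = ⋃_{j=0}^{ℓ-1} 𝔇^{(j)}(A)`. -/
def DgAll {n m : ℕ} [NeZero n] (A : Tensor (Fin n) m) (ℓ : ℕ) : Set (Fin n → ℂ) :=
  {d | ∃ j < ℓ, d ∈ Dgj A ℓ j}

/-- `𝔇^{(0)}(A)`. -/
def Dg0 {n m : ℕ} [NeZero n] (A : Tensor (Fin n) m) : Set (Fin n → ℂ) :=
  {d | (∀ i, d i ≠ 0) ∧ d 0 = 1 ∧ ∀ i f, A i f = diagConj d A i f}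

/-- Restriction (principal subtensor) of `A` to a set `S` of indices. -/
def restrict (A : Tensor ι m) (S : Set ι) : Tensor S m :=
  fun i f => A i.1 (fun j => (f j).1)

attribute [local instance] Classical.propDecidable

/-- The adjacency tensor of an `m`-uniform hypergraph with edge set `E` on `Fin n`. -/
noncomputable def adjT (n m : ℕ) (E : Finset (Finset (Fin n))) : Tensor (Fin n) m :=
  fun i f => if insert i (Finset.image f Finset.univ) ∈ E
    then (1 : ℂ) / (Nat.factorial (m - 1)) else 0

/-- Connectivity of vertices in a hypergraph. -/
def HConn {n : ℕ} (E : Finset (Finset (Fin n))) : Fin n → Fin n → Prop :=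
  Relation.ReflTransGen (fun u w => ∃ e ∈ E, u ∈ e ∧ w ∈ e)


section Aux
set_option linter.unusedSectionVars false
set_option linter.unusedVariables false
open Finset

variable [DecidableEq ι]

/-- Edge-sum application: `∑_{e ∋ i} ∏_{v ∈ e \ i} x v`. -/
noncomputable def hApp {R : Type} [CommRing R] (ℰ : Finset (Finset ι)) (x : ι → R) (i : ι) : R :=
  ∑ e ∈ ℰ.filter (fun e => i ∈ e), ∏ v ∈ e.erase i, x v

/-- `B` is the adjacency tensor of the edge set `ℰ`. -/
def IsAdj (m : ℕ) (B : Tensor ι m) (ℰ : Finset (Finset ι)) : Prop :=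
  ∀ i f, B i f = if insert i (Finset.image f Finset.univ) ∈ ℰ
    then (1 : ℂ) / (Nat.factorial (m - 1)) else 0

lemma adjT_isAdj (n m : ℕ) (E : Finset (Finset (Fin n))) : IsAdj m (adjT n m E) E := by
  intro i f
  show (if insert i (Finset.image f Finset.univ) ∈ E
      then (1 : ℂ) / (Nat.factorial (m - 1)) else 0) = _
  congr!

lemma card_filter_image_eq {k : ℕ} (s : Finset ι) (hs : s.card = k) :
    (Finset.univ.filter (fun f : Fin k → ι => Finset.image f Finset.univ = s)).card
      = Nat.factorial k := by
  classical
  rw [show (Finset.univ.filter (fun f : Fin k → ι => Finset.image f Finset.univ = s)).card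
      = Fintype.card {f : Fin k → ι // Finset.image f Finset.univ = s} from
    (Fintype.card_subtype _).symm]
  have hinj : ∀ (f : Fin k → ι), Finset.image f Finset.univ = s → Function.Injective f := by
    intro f hf
    have hc : (Finset.univ.image f).card = (Finset.univ : Finset (Fin k)).card := by
      rw [hf, hs]; simp
    have h2 := Finset.card_image_iff.mp hc
    intro a b hab
    exact h2 (by simp) (by simp) hab
  have e : {f : Fin k → ι // Finset.image f Finset.univ = s} ≃ (Fin k ↪ {v // v ∈ s}) :=
    { toFun := fun fp => ⟨fun j => ⟨fp.1 j, by
        have := Finset.mem_image_of_mem fp.1 (Finset.mem_univ j)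
        rwa [fp.2] at this⟩,
        fun a b hab => hinj fp.1 fp.2 (congrArg Subtype.val hab)⟩
      invFun := fun g => ⟨fun j => (g j : ι), by
        have hbij : Function.Bijective (fun j : Fin k => g j) :=
          (Fintype.bijective_iff_injective_and_card _).mpr ⟨g.injective, by
            simp [Fintype.card_coe, hs]⟩
        apply Finset.Subset.antisymm
        · intro v hv
          rcases Finset.mem_image.mp hv with ⟨j, -, rfl⟩
          exact (g j).2
        · intro v hv
          rcases hbij.2 ⟨v, hv⟩ with ⟨j, hj⟩
          exact Finset.mem_image.mpr ⟨j, Finset.mem_univ j, congrArg Subtype.val hj⟩⟩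
      left_inv := fun fp => Subtype.ext rfl
      right_inv := fun g => Function.Embedding.ext fun j => Subtype.ext rfl }
  rw [Fintype.card_congr e, Fintype.card_embedding_eq, Fintype.card_coe, hs, Fintype.card_fin,
    Nat.descFactorial_self]

lemma tApp_eq_hApp {B : Tensor ι m} {ℰ : Finset (Finset ι)} (hB : IsAdj m B ℰ)
    (hunif : ∀ e ∈ ℰ, e.card = m) (hm : 2 ≤ m) (x : ι → ℂ) (i : ι) :
    tApp B x i = hApp ℰ x i := by
  classical
  have h1 : tApp B x i = ∑ f ∈ Finset.univ.filter
      (fun f : Fin (m-1) → ι => insert i (Finset.image f Finset.univ) ∈ ℰ),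
      ((Nat.factorial (m-1) : ℂ))⁻¹ * ∏ j, x (f j) := by
    rw [tApp, Finset.sum_filter]
    refine Finset.sum_congr rfl fun f _ => ?_
    rw [hB i f]
    split <;> simp [one_div]
  rw [h1, ← Finset.sum_fiberwise_of_maps_to
      (g := fun f : Fin (m-1) → ι => insert i (Finset.image f Finset.univ))
      (t := ℰ.filter (fun e => i ∈ e))
      (fun f hf => Finset.mem_filter.mpr ⟨(Finset.mem_filter.mp hf).2, Finset.mem_insert_self _ _⟩)]
  refine Finset.sum_congr rfl fun e he => ?_
  rw [Finset.mem_filter] at he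
  obtain ⟨heE, hie⟩ := he
  have hcard : e.card = m := hunif e heE
  have hfib : (Finset.univ.filter (fun f : Fin (m-1) → ι =>
        insert i (Finset.image f Finset.univ) ∈ ℰ)).filter
        (fun f => insert i (Finset.image f Finset.univ) = e)
      = Finset.univ.filter (fun f : Fin (m-1) → ι => Finset.image f Finset.univ = e.erase i) := by
    rw [Finset.filter_filter]
    refine Finset.filter_congr fun f _ => ?_
    constructor
    · rintro ⟨-, hfe⟩
      apply Finset.Subset.antisymm
      · intro v hv
        rcases Finset.mem_image.mp hv with ⟨j, -, rfl⟩
        have hvmem : f j ∈ e := by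
          rw [← hfe]; exact Finset.mem_insert_of_mem hv
        refine Finset.mem_erase.mpr ⟨?_, hvmem⟩
        rintro rfl
        have h2 : insert (f j) (Finset.image f Finset.univ) = Finset.image f Finset.univ :=
          Finset.insert_eq_self.mpr hv
        have h3 : (Finset.image f Finset.univ).card ≤ m - 1 := by
          calc (Finset.image f Finset.univ).card ≤ (Finset.univ : Finset (Fin (m-1))).card :=
                Finset.card_image_le
          _ = m - 1 := by simp
        rw [h2] at hfe
        rw [hfe] at h3
        omega
      · intro v hv
        rcases Finset.mem_erase.mp hv with ⟨hvne, hve⟩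
        have : v ∈ insert i (Finset.image f Finset.univ) := by rw [hfe]; exact hve
        rcases Finset.mem_insert.mp this with h | h
        · exact absurd h hvne
        · exact h
    · intro hf
      have heq : insert i (Finset.image f Finset.univ) = e := by
        rw [hf, Finset.insert_erase hie]
      exact ⟨heq ▸ heE, heq⟩
  rw [hfib]
  have hcards : (e.erase i).card = m - 1 := by
    rw [Finset.card_erase_of_mem hie, hcard]
  have hterm : ∀ f ∈ Finset.univ.filter
      (fun f : Fin (m-1) → ι => Finset.image f Finset.univ = e.erase i),
      ((Nat.factorial (m-1) : ℂ))⁻¹ * ∏ j, x (f j)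
        = ((Nat.factorial (m-1) : ℂ))⁻¹ * ∏ v ∈ e.erase i, x v := by
    intro f hf
    rw [Finset.mem_filter] at hf
    have hinj : ∀ a ∈ (Finset.univ : Finset (Fin (m-1))), ∀ b ∈ Finset.univ, f a = f b → a = b := by
      have hc : (Finset.univ.image f).card = (Finset.univ : Finset (Fin (m-1))).card := by
        rw [hf.2, hcards]; simp
      have := Finset.card_image_iff.mp hc
      intro a _ b _ hab
      exact this (by simp) (by simp) hab
    rw [← Finset.prod_image hinj, hf.2]
  rw [Finset.sum_congr rfl hterm, Finset.sum_const, card_filter_image_eq _ hcards, nsmul_eq_mul,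
    ← mul_assoc, mul_inv_cancel₀, one_mul]
  exact_mod_cast Nat.factorial_ne_zero (m-1)

noncomputable def polyF (ℰ : Finset (Finset ι)) (x : ι → ℝ) : ℝ := ∑ e ∈ ℰ, ∏ v ∈ e, x v

lemma polyF_nonneg {ℰ : Finset (Finset ι)} {x : ι → ℝ} (hx : ∀ v, 0 ≤ x v) :
    0 ≤ polyF ℰ x :=
  Finset.sum_nonneg fun e _ => Finset.prod_nonneg fun v _ => hx v

lemma polyF_mono {ℰ : Finset (Finset ι)} {x y : ι → ℝ} (hx : ∀ v, 0 ≤ x v)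
    (hxy : ∀ v, x v ≤ y v) : polyF ℰ x ≤ polyF ℰ y :=
  Finset.sum_le_sum fun e _ => Finset.prod_le_prod (fun v _ => hx v) (fun v _ => hxy v)

lemma polyF_smul {ℰ : Finset (Finset ι)} (hunif : ∀ e ∈ ℰ, e.card = m) (c : ℝ) (x : ι → ℝ) :
    polyF ℰ (fun v => c * x v) = c ^ m * polyF ℰ x := by
  rw [polyF, polyF, Finset.mul_sum]
  refine Finset.sum_congr rfl fun e he => ?_
  rw [Finset.prod_mul_distrib, Finset.prod_const, hunif e he]

lemma hApp_nonneg {ℰ : Finset (Finset ι)} {x : ι → ℝ} (hx : ∀ v, 0 ≤ x v) (i : ι) :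
    0 ≤ hApp ℰ x i :=
  Finset.sum_nonneg fun e _ => Finset.prod_nonneg fun v _ => hx v

lemma hApp_mono {ℰ : Finset (Finset ι)} {x y : ι → ℝ} (hx : ∀ v, 0 ≤ x v)
    (hxy : ∀ v, x v ≤ y v) (i : ι) : hApp ℰ x i ≤ hApp ℰ y i :=
  Finset.sum_le_sum fun e _ => Finset.prod_le_prod (fun v _ => hx v) (fun v _ => hxy v)

lemma hApp_smul {R : Type} [CommRing R] {ℰ : Finset (Finset ι)}
    (hunif : ∀ e ∈ ℰ, e.card = m) (c : R) (x : ι → R) (i : ι) :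
    hApp ℰ (fun v => c * x v) i = c ^ (m - 1) * hApp ℰ x i := by
  rw [hApp, hApp, Finset.mul_sum]
  refine Finset.sum_congr rfl fun e he => ?_
  rw [Finset.mem_filter] at he
  rw [Finset.prod_mul_distrib, Finset.prod_const, Finset.card_erase_of_mem he.2,
    hunif e he.1]

lemma hApp_cast {ℰ : Finset (Finset ι)} (x : ι → ℝ) (i : ι) :
    ((hApp ℰ x i : ℝ) : ℂ) = hApp ℰ (fun v => (x v : ℂ)) i := by
  rw [hApp, hApp]
  push_cast
  rfl

lemma abs_hApp_le {ℰ : Finset (Finset ι)} (x : ι → ℂ) (i : ι) :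
    ‖hApp ℰ x i‖ ≤ hApp ℰ (fun v => ‖x v‖) i := by
  refine le_trans (norm_sum_le _ _) ?_
  refine le_of_eq (Finset.sum_congr rfl fun e _ => ?_)
  rw [norm_prod]

/-- congruence: `hApp` only depends on the values at vertices of edges through `i`. -/
lemma hApp_congr {R : Type} [CommRing R] {ℰ : Finset (Finset ι)} {x y : ι → R} (i : ι)
    (h : ∀ e ∈ ℰ, i ∈ e → ∀ v ∈ e, x v = y v) : hApp ℰ x i = hApp ℰ y i := by
  refine Finset.sum_congr rfl fun e he => ?_
  rw [Finset.mem_filter] at he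
  exact Finset.prod_congr rfl fun v hv => h e he.1 he.2 v (Finset.mem_of_mem_erase hv)

/-- existence of positive m-th roots -/
lemma exists_pow_eq {a : ℝ} (ha : 0 < a) (hm : m ≠ 0) : ∃ c : ℝ, 0 < c ∧ c ^ m = a := by
  refine ⟨a ^ ((m : ℝ)⁻¹), Real.rpow_pos_of_pos ha _, ?_⟩
  rw [← Real.rpow_natCast (a ^ ((m : ℝ)⁻¹)) m, ← Real.rpow_mul ha.le,
    inv_mul_cancel₀ (by exact_mod_cast hm), Real.rpow_one]

/-- factors of an equal product are equal, under domination. -/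
lemma prod_factors_eq {s : Finset ι} {a b : ι → ℝ}
    (h0 : ∀ v ∈ s, 0 ≤ a v) (hab : ∀ v ∈ s, a v ≤ b v) (hb : ∀ v ∈ s, 0 < b v)
    (hprod : ∏ v ∈ s, a v = ∏ v ∈ s, b v) : ∀ v ∈ s, a v = b v := by
  by_contra hc
  push_neg at hc
  obtain ⟨v, hv, hne⟩ := hc
  have hlt : a v < b v := lt_of_le_of_ne (hab v hv) hne
  have h1 : ∏ w ∈ s, a w ≤ a v * ∏ w ∈ s.erase v, b w := by
    rw [← Finset.mul_prod_erase s a hv]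
    refine mul_le_mul_of_nonneg_left ?_ (h0 v hv)
    exact Finset.prod_le_prod (fun w hw => h0 w (Finset.mem_of_mem_erase hw))
      (fun w hw => hab w (Finset.mem_of_mem_erase hw))
  have h2 : a v * ∏ w ∈ s.erase v, b w < b v * ∏ w ∈ s.erase v, b w := by
    refine mul_lt_mul_of_pos_right hlt ?_
    exact Finset.prod_pos fun w hw => hb w (Finset.mem_of_mem_erase hw)
  rw [Finset.mul_prod_erase s b hv] at h2
  rw [hprod] at h1
  exact absurd (lt_of_le_of_lt h1 h2) (lt_irrefl _)

/-- a complex number whose real part equals its absolute value is that nonnegative real. -/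
lemma complex_re_eq_abs {z : ℂ} (h : z.re = ‖z‖) : z = (‖z‖ : ℝ) := by
  have h2 : (‖z‖) ^ 2 = z.re ^ 2 + z.im ^ 2 := by
    rw [Complex.sq_norm, Complex.normSq_apply]; ring
  rw [h] at h2
  have him : z.im = 0 := by nlinarith [sq_nonneg z.im]
  apply Complex.ext
  · simpa using h
  · simpa using him

/-- closure induction along connectivity -/
lemma conn_ind {ℰ : Finset (Finset ι)}
    (hconn : ∀ u w : ι, Relation.ReflTransGen (fun a b => ∃ e ∈ ℰ, a ∈ e ∧ b ∈ e) u w)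
    (P : ι → Prop) (i0 : ι) (hP : P i0)
    (hstep : ∀ a b : ι, P a → (∃ e ∈ ℰ, a ∈ e ∧ b ∈ e) → P b) : ∀ j, P j := by
  intro j
  have h := hconn i0 j
  induction h with
  | refl => exact hP
  | tail h1 h2 ih => exact hstep _ _ ih h2

theorem PF_main (hm : 2 ≤ m) (ℰ : Finset (Finset ι)) (hunif : ∀ e ∈ ℰ, e.card = m)
    (hne : ℰ.Nonempty)
    (hconn : ∀ u w : ι, Relation.ReflTransGen (fun a b => ∃ e ∈ ℰ, a ∈ e ∧ b ∈ e) u w) :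
    ∃ (lam : ℝ) (z : ι → ℝ), 0 < lam ∧ (∀ v, 0 < z v) ∧
      (∀ i, hApp ℰ z i = lam * z i ^ (m-1)) ∧
      (∀ (μ : ℂ) (x : ι → ℂ), x ≠ 0 → (∀ i, hApp ℰ x i = μ * x i ^ (m-1)) →
        ‖μ‖ ≤ lam) ∧
      (∀ (x : ι → ℂ), x ≠ 0 → (∀ i, hApp ℰ x i = (lam : ℂ) * x i ^ (m-1)) →
        ∃ (c : ℂ) (ω : ι → ℂ), c ≠ 0 ∧ (∀ v, ω v ^ m = 1) ∧ ∀ v, x v = c * z v * ω v) := by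
  classical
  have hm0 : m ≠ 0 := by omega
  obtain ⟨e₀, he₀⟩ := hne
  have hcard₀ : e₀.card = m := hunif e₀ he₀
  obtain ⟨a₀, ha₀, b₀, hb₀, hab₀⟩ := Finset.one_lt_card.mp
    (by omega : 1 < e₀.card)
  have hn : 0 < Fintype.card ι := Fintype.card_pos_iff.mpr ⟨a₀⟩
  set Δ : Set (ι → ℝ) := {x | (∀ v, 0 ≤ x v) ∧ ∑ v, x v ^ m = 1} with hΔ
  obtain ⟨u₀, hu₀pos, hu₀⟩ := exists_pow_eq (a := (Fintype.card ι : ℝ)⁻¹) (by positivity) hm0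
  have huΔ : (fun _ : ι => u₀) ∈ Δ := by
    refine ⟨fun v => hu₀pos.le, ?_⟩
    rw [Finset.sum_const, hu₀, Finset.card_univ, nsmul_eq_mul]
    field_simp
  have hclosed : IsClosed Δ := by
    have h1 : IsClosed {x : ι → ℝ | ∀ v, 0 ≤ x v} := by
      have he : {x : ι → ℝ | ∀ v, 0 ≤ x v} = ⋂ v, {x | 0 ≤ x v} := by
        ext x; simp
      rw [he]
      exact isClosed_iInter fun v => isClosed_le continuous_const (continuous_apply v)
    have h2 : IsClosed {x : ι → ℝ | ∑ v, x v ^ m = 1} :=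
      isClosed_eq (continuous_finset_sum _ fun v _ => (continuous_apply v).pow m)
        continuous_const
    have he2 : Δ = {x : ι → ℝ | ∀ v, 0 ≤ x v} ∩ {x | ∑ v, x v ^ m = 1} := by
      ext x; exact ⟨fun h => ⟨h.1, h.2⟩, fun h => ⟨h.1, h.2⟩⟩
    rw [he2]; exact h1.inter h2
  have hsub : Δ ⊆ Metric.closedBall 0 1 := by
    intro x hx
    rw [Metric.mem_closedBall, dist_zero_right]
    rw [pi_norm_le_iff_of_nonneg zero_le_one]
    intro v
    rw [Real.norm_eq_abs, abs_of_nonneg (hx.1 v)]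
    by_contra hgt
    push_neg at hgt
    have h2 : (1:ℝ) < x v ^ m := one_lt_pow₀ hgt hm0
    have h3 : x v ^ m ≤ ∑ w, x w ^ m :=
      Finset.single_le_sum (fun w _ => pow_nonneg (hx.1 w) m) (Finset.mem_univ v)
    rw [hx.2] at h3; linarith
  have hcompact : IsCompact Δ := (isCompact_closedBall 0 1).of_isClosed_subset hclosed hsub
  have hcont : Continuous (polyF ℰ) :=
    continuous_finset_sum _ fun e _ => continuous_finset_prod _ fun v _ => continuous_apply v
  obtain ⟨z, hzΔ, hzmax'⟩ := hcompact.exists_isMaxOn ⟨_, huΔ⟩ hcont.continuousOn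
  have hzmax : ∀ y ∈ Δ, polyF ℰ y ≤ polyF ℰ z := fun y hy => hzmax' hy
  set lam0 := polyF ℰ z with hlam0
  -- K1
  have hK1 : ∀ y : ι → ℝ, (∀ v, 0 ≤ y v) → polyF ℰ y ≤ lam0 * ∑ v, y v ^ m := by
    intro y hy
    by_cases hy0 : ∀ v, y v = 0
    · have h1 : polyF ℰ y = 0 := by
        rw [polyF]
        refine Finset.sum_eq_zero fun e he => ?_
        have hce : e.Nonempty := Finset.card_pos.mp (by rw [hunif e he]; omega)
        obtain ⟨v, hv⟩ := hce
        exact Finset.prod_eq_zero hv (hy0 v)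
      have h2 : ∑ v, y v ^ m = 0 :=
        Finset.sum_eq_zero fun v _ => by rw [hy0 v]; exact zero_pow hm0
      rw [h1, h2, mul_zero]
    · push_neg at hy0
      obtain ⟨v₀, hv₀⟩ := hy0
      have hN : 0 < ∑ v, y v ^ m := by
        refine Finset.sum_pos' (fun v _ => pow_nonneg (hy v) m) ⟨v₀, Finset.mem_univ v₀, ?_⟩
        exact pow_pos (lt_of_le_of_ne (hy v₀) (Ne.symm hv₀)) m
      obtain ⟨c, hcpos, hcm⟩ := exists_pow_eq (inv_pos.mpr hN) hm0
      have hmem : (fun v => c * y v) ∈ Δ := by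
        refine ⟨fun v => mul_nonneg hcpos.le (hy v), ?_⟩
        rw [Finset.sum_congr rfl fun v _ => mul_pow c (y v) m, ← Finset.mul_sum, hcm,
          inv_mul_cancel₀ hN.ne']
      have hle := hzmax _ hmem
      rw [polyF_smul hunif, hcm] at hle
      calc polyF ℰ y = (∑ v, y v ^ m) * ((∑ v, y v ^ m)⁻¹ * polyF ℰ y) := by
            field_simp
      _ ≤ (∑ v, y v ^ m) * lam0 := mul_le_mul_of_nonneg_left hle hN.le
      _ = lam0 * ∑ v, y v ^ m := mul_comm _ _
  have hlam0pos : 0 < lam0 := by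
    have h1 : polyF ℰ (fun _ => u₀) ≤ lam0 := hzmax _ huΔ
    have h2 : 0 < polyF ℰ (fun _ => u₀) := by
      rw [polyF]
      exact Finset.sum_pos (fun e he => Finset.prod_pos fun v _ => hu₀pos) ⟨e₀, he₀⟩
    linarith
  -- positivity of the maximizer
  have hzpos : ∀ v, 0 < z v := by
    by_contra hc
    push_neg at hc
    obtain ⟨w₀, hw₀⟩ := hc
    have hfull : ∃ e ∈ ℰ, ∀ v ∈ e, 0 < z v := by
      by_contra hful
      push_neg at hful
      have h0 : polyF ℰ z = 0 := by
        rw [polyF]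
        refine Finset.sum_eq_zero fun e he => ?_
        obtain ⟨v, hv, hvz⟩ := hful e he
        exact Finset.prod_eq_zero hv (le_antisymm hvz (hzΔ.1 v))
      rw [← hlam0] at h0
      exact absurd h0 hlam0pos.ne'
    obtain ⟨efull, hefull, hfullpos⟩ := hfull
    obtain ⟨afull, hafull⟩ : efull.Nonempty :=
      Finset.card_pos.mp (by rw [hunif _ hefull]; omega)
    have hcross : ∃ e ∈ ℰ, (∃ a ∈ e, 0 < z a) ∧ ∃ b ∈ e, ¬ 0 < z b := by
      have key : ∀ u w : ι, Relation.ReflTransGen (fun a b => ∃ e ∈ ℰ, a ∈ e ∧ b ∈ e) u w →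
          0 < z u → ¬ 0 < z w → ∃ e ∈ ℰ, (∃ a ∈ e, 0 < z a) ∧ ∃ b ∈ e, ¬ 0 < z b := by
        intro u w h
        induction h with
        | refl => exact fun hu hw => absurd hu hw
        | @tail b c h1 h2 ih =>
          intro hu hw
          by_cases hb : 0 < z b
          · obtain ⟨e, he, hbe, hce⟩ := h2
            exact ⟨e, he, ⟨b, hbe, hb⟩, ⟨c, hce, hw⟩⟩
          · exact ih hu hb
      exact key _ _ (hconn afull w₀) (hfullpos afull hafull) (by rw [not_lt]; exact hw₀)
    obtain ⟨ec, hec, ⟨ac, hac, hacpos⟩, ⟨bc, hbc, hbcnpos⟩⟩ := hcross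
    set S : Finset ι := ec.filter (fun v => ¬ 0 < z v) with hS
    have hSne : S.Nonempty := ⟨bc, Finset.mem_filter.mpr ⟨hbc, hbcnpos⟩⟩
    have hSsub : S ⊆ ec := Finset.filter_subset _ _
    have hanotS : ac ∉ S := fun h => (Finset.mem_filter.mp h).2 hacpos
    have hcardec : ec.card = m := hunif _ hec
    have hkS : S.card < m := by
      have hss : S ⊂ ec := ⟨hSsub, fun h => hanotS (h hac)⟩
      have := Finset.card_lt_card hss
      omega
    have hkS1 : 1 ≤ S.card := Finset.card_pos.mpr hSne
    have hSz : ∀ v ∈ S, z v = 0 := fun v hv =>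
      le_antisymm (not_lt.mp (Finset.mem_filter.mp hv).2) (hzΔ.1 v)
    set c₁ : ℝ := ∏ v ∈ ec \ S, z v with hc₁
    have hc₁pos : 0 < c₁ := by
      refine Finset.prod_pos fun v hv => ?_
      rcases Finset.mem_sdiff.mp hv with ⟨hve, hvns⟩
      by_contra hnp
      exact hvns (Finset.mem_filter.mpr ⟨hve, hnp⟩)
    set k := S.card with hk
    have hlk : (0:ℝ) ≤ lam0 * k := mul_nonneg hlam0pos.le (Nat.cast_nonneg k)
    have hlk1 : (0:ℝ) < lam0 * k + 1 := by linarith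
    set ε : ℝ := min 1 (c₁ / (lam0 * k + 1)) with hε
    have hεpos : 0 < ε := lt_min one_pos (div_pos hc₁pos hlk1)
    have hεle1 : ε ≤ 1 := min_le_left _ _
    set y : ι → ℝ := fun v => z v + if v ∈ S then ε else 0 with hy
    have hynn : ∀ v, 0 ≤ y v := by
      intro v
      dsimp only [y]
      split
      · linarith [hzΔ.1 v, hεpos]
      · simp [hzΔ.1 v]
    have hyge : ∀ v, z v ≤ y v := by
      intro v
      dsimp only [y]
      split
      · linarith [hεpos]
      · simp
    have hpy : lam0 + ε ^ k * c₁ ≤ polyF ℰ y := by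
      have hsplit : polyF ℰ y = (∏ v ∈ ec, y v) + ∑ e ∈ ℰ.erase ec, ∏ v ∈ e, y v :=
        (Finset.add_sum_erase ℰ _ hec).symm
      have hterm : ∏ v ∈ ec, y v = c₁ * ε ^ k := by
        rw [← Finset.prod_sdiff hSsub]
        have h1 : ∏ v ∈ S, y v = ε ^ k := by
          have : ∀ v ∈ S, y v = ε := by
            intro v hv
            dsimp only [y]
            rw [hSz v hv, if_pos hv, zero_add]
          rw [Finset.prod_congr rfl this, Finset.prod_const, hk]
        have h2 : ∏ v ∈ ec \ S, y v = c₁ := by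
          refine Finset.prod_congr rfl fun v hv => ?_
          dsimp only [y]
          rw [if_neg (Finset.mem_sdiff.mp hv).2, add_zero]
        rw [h1, h2]
      have hrest : ∑ e ∈ ℰ.erase ec, ∏ v ∈ e, z v ≤ ∑ e ∈ ℰ.erase ec, ∏ v ∈ e, y v :=
        Finset.sum_le_sum fun e _ =>
          Finset.prod_le_prod (fun v _ => hzΔ.1 v) (fun v _ => hyge v)
      have hzec : ∏ v ∈ ec, z v = 0 :=
        Finset.prod_eq_zero hbc (le_antisymm (not_lt.mp hbcnpos) (hzΔ.1 bc))
      have hlz : lam0 = 0 + ∑ e ∈ ℰ.erase ec, ∏ v ∈ e, z v := by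
        rw [hlam0, polyF, ← Finset.add_sum_erase ℰ _ hec, hzec]
      rw [hsplit, hterm]
      rw [hlz]
      have : c₁ * ε ^ k = ε ^ k * c₁ := mul_comm _ _
      linarith [hrest]
    have hsy : ∑ v, y v ^ m = 1 + k * ε ^ m := by
      have h1 : ∀ v, y v ^ m = z v ^ m + (if v ∈ S then ε ^ m else 0) := by
        intro v
        dsimp only [y]
        by_cases hv : v ∈ S
        · rw [if_pos hv, if_pos hv, hSz v hv, zero_add, zero_pow hm0, zero_add]
        · rw [if_neg hv, if_neg hv, add_zero, add_zero]
      rw [Finset.sum_congr rfl fun v _ => h1 v, Finset.sum_add_distrib, hzΔ.2]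
      congr 1
      rw [Finset.sum_ite_mem, Finset.univ_inter, Finset.sum_const, hk, nsmul_eq_mul]
    have hKy := hK1 y hynn
    rw [hsy] at hKy
    have hineq : ε ^ k * c₁ ≤ lam0 * k * ε ^ m := by
      have hexp : lam0 * (1 + k * ε ^ m) = lam0 + lam0 * k * ε ^ m := by ring
      rw [hexp] at hKy
      linarith
    have hmk : ε ^ m ≤ ε * ε ^ k := by
      have hmeq : m = (m - k) + k := by omega
      rw [hmeq, pow_add]
      refine mul_le_mul_of_nonneg_right ?_ (pow_nonneg hεpos.le k)
      calc ε ^ (m - k) ≤ ε ^ 1 := pow_le_pow_of_le_one hεpos.le hεle1 (by omega)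
      _ = ε := pow_one ε
    have hfin : c₁ ≤ lam0 * k * ε := by
      have h5 : c₁ * ε ^ k ≤ (lam0 * k * ε) * ε ^ k := by
        calc c₁ * ε ^ k = ε ^ k * c₁ := mul_comm _ _
        _ ≤ lam0 * k * ε ^ m := hineq
        _ ≤ lam0 * k * (ε * ε ^ k) := mul_le_mul_of_nonneg_left hmk hlk
        _ = (lam0 * k * ε) * ε ^ k := by ring
      exact le_of_mul_le_mul_right h5 (pow_pos hεpos k)
    have h7 : lam0 * k * ε ≤ lam0 * k * (c₁ / (lam0 * k + 1)) :=
      mul_le_mul_of_nonneg_left (min_le_right _ _) hlk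
    have h8 : lam0 * k * (c₁ / (lam0 * k + 1)) < c₁ := by
      have h9 : lam0 * k / (lam0 * k + 1) < 1 := by
        rw [div_lt_one hlk1]
        linarith
      calc lam0 * k * (c₁ / (lam0 * k + 1)) = (lam0 * k / (lam0 * k + 1)) * c₁ := by ring
      _ < 1 * c₁ := by nlinarith [hc₁pos]
      _ = c₁ := one_mul c₁
    linarith
  -- eigen equation at the maximizer
  set lam : ℝ := m * lam0 with hlam
  have hlampos : 0 < lam := by
    have : (2:ℝ) ≤ m := by exact_mod_cast hm
    nlinarith
  have hzeig : ∀ i, hApp ℰ z i = lam * z i ^ (m - 1) := by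
    intro i
    set B := hApp ℰ z i with hB
    set C2 := ∑ e ∈ ℰ.filter (fun e => ¬ i ∈ e), ∏ v ∈ e, z v with hC2
    set C3 := ∑ v ∈ Finset.univ.erase i, z v ^ m with hC3
    have hval : ∀ s : ℝ, polyF ℰ (fun v => z v + if v = i then s else 0)
        = (z i + s) * B + C2 := by
      intro s
      have hysi : (z i + if i = i then s else 0) = z i + s := by rw [if_pos rfl]
      have hysv : ∀ v, v ≠ i → (z v + if v = i then s else 0) = z v := fun v hv => by
        rw [if_neg hv, add_zero]
      rw [polyF, ← Finset.sum_filter_add_sum_filter_not ℰ (fun e => i ∈ e)]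
      congr 1
      · rw [hB, hApp, Finset.mul_sum]
        refine Finset.sum_congr rfl fun e he => ?_
        rw [Finset.mem_filter] at he
        rw [← Finset.mul_prod_erase e _ he.2, hysi]
        congr 1
        exact Finset.prod_congr rfl fun v hv => hysv v (Finset.ne_of_mem_erase hv)
      · refine Finset.sum_congr rfl fun e he => ?_
        rw [Finset.mem_filter] at he
        exact Finset.prod_congr rfl fun v hv => hysv v (fun h => he.2 (h ▸ hv))
    have hsum : ∀ s : ℝ, ∑ v, (z v + if v = i then s else 0) ^ m = (z i + s) ^ m + C3 := by
      intro s
      rw [← Finset.add_sum_erase Finset.univ _ (Finset.mem_univ i)]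
      congr 1
      · rw [if_pos rfl]
      · refine Finset.sum_congr rfl fun v hv => ?_
        rw [if_neg (Finset.ne_of_mem_erase hv), add_zero]
    set g : ℝ → ℝ := fun s => (z i + s) * B + C2 - lam0 * ((z i + s) ^ m + C3) with hg
    have hg0 : g 0 = 0 := by
      have h1 := hval 0
      have hz0 : (fun v => z v + if v = i then (0:ℝ) else 0) = z := by
        funext v; split <;> simp
      rw [hz0] at h1
      have h2 : (1:ℝ) = (z i + 0) ^ m + C3 := by
        rw [add_zero, ← hzΔ.2, ← Finset.add_sum_erase Finset.univ _ (Finset.mem_univ i)]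
      dsimp only [g]
      rw [← h1, ← h2, ← hlam0]
      ring
    have hloc : IsLocalMax g 0 := by
      rw [IsLocalMax, IsMaxFilter]
      filter_upwards [Metric.ball_mem_nhds (0:ℝ) (hzpos i)] with s hs
      rw [hg0]
      have hsabs : |s| < z i := by
        rw [Metric.mem_ball, Real.dist_eq, sub_zero] at hs
        exact hs
      have hyspos : ∀ v, 0 ≤ (z v + if v = i then s else 0) := by
        intro v
        by_cases h : v = i
        · rw [if_pos h, h]
          cases abs_lt.mp hsabs with
          | intro h1 h2 => linarith
        · rw [if_neg h, add_zero]
          exact hzΔ.1 v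
      have := hK1 _ hyspos
      rw [hval s, hsum s] at this
      dsimp only [g]
      linarith
    have hder : HasDerivAt g (B - lam0 * (m * (z i + 0) ^ (m - 1) * 1)) 0 := by
      have h1 : HasDerivAt (fun s : ℝ => z i + s) 1 0 := by
        simpa using (hasDerivAt_id (0:ℝ)).const_add (z i)
      have h2 : HasDerivAt (fun s : ℝ => (z i + s) ^ m) ((m : ℝ) * (z i + 0) ^ (m-1) * 1) 0 :=
        h1.pow m
      have h3 : HasDerivAt (fun s : ℝ => (z i + s) * B + C2) (1 * B) 0 :=
        (h1.mul_const B).add_const C2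
      have h4 := (h2.add_const C3).const_mul lam0
      have h5 := h3.sub h4
      simp only [add_zero, mul_one, one_mul] at h5 ⊢
      exact h5
    have hzero := hloc.hasDerivAt_eq_zero hder
    rw [add_zero, mul_one] at hzero
    have hBeq : B = lam0 * (m * z i ^ (m - 1)) := by linarith
    show B = lam * z i ^ (m - 1)
    rw [hBeq, hlam]
    ring
  haveI hnei : Nonempty ι := ⟨a₀⟩
  -- maximal ratio
  have hmax_ratio : ∀ (x : ι → ℂ), x ≠ 0 → ∃ t : ℝ, 0 < t ∧
      (∀ i, ‖x i‖ ≤ t * z i) ∧ ∃ i₀, ‖x i₀‖ = t * z i₀ := by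
    intro x hx
    obtain ⟨i₀, -, hi₀⟩ := Finset.exists_max_image Finset.univ
      (fun i => ‖x i‖ / z i) Finset.univ_nonempty
    refine ⟨‖x i₀‖ / z i₀, ?_, ?_, i₀, ?_⟩
    · obtain ⟨v, hv⟩ : ∃ v, x v ≠ 0 := by
        by_contra hall; push_neg at hall; exact hx (funext hall)
      have h1 : 0 < ‖x v‖ := norm_pos_iff.mpr hv
      exact lt_of_lt_of_le (div_pos h1 (hzpos v)) (hi₀ v (Finset.mem_univ v))
    · intro i
      have h2 := hi₀ i (Finset.mem_univ i)
      calc ‖x i‖ = (‖x i‖ / z i) * z i := by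
            rw [div_mul_cancel₀ _ (hzpos i).ne']
      _ ≤ (‖x i₀‖ / z i₀) * z i := mul_le_mul_of_nonneg_right h2 (hzpos i).le
    · rw [div_mul_cancel₀ _ (hzpos i₀).ne']
  -- Collatz–Wielandt bound
  have hCW : ∀ (μ : ℂ) (x : ι → ℂ), x ≠ 0 → (∀ i, hApp ℰ x i = μ * x i ^ (m-1)) →
      ‖μ‖ ≤ lam := by
    intro μ x hx heig
    obtain ⟨t, ht0, hxle, i₀, hxi₀⟩ := hmax_ratio x hx
    have h1 : ‖hApp ℰ x i₀‖ ≤ hApp ℰ (fun v => t * z v) i₀ :=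
      le_trans (abs_hApp_le (ℰ := ℰ) x i₀) (hApp_mono (fun v => norm_nonneg _) hxle i₀)
    rw [heig i₀, norm_mul, norm_pow, hxi₀] at h1
    rw [hApp_smul hunif t z i₀, hzeig i₀] at h1
    have h2 : ‖μ‖ * (t * z i₀) ^ (m-1) ≤ lam * (t * z i₀) ^ (m-1) := by
      calc ‖μ‖ * (t * z i₀) ^ (m-1) ≤ t ^ (m-1) * (lam * z i₀ ^ (m-1)) := h1
      _ = lam * (t * z i₀) ^ (m-1) := by ring
    exact le_of_mul_le_mul_right h2 (pow_pos (mul_pos ht0 (hzpos i₀)) _)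
  -- rigidity at lam
  have hrig : ∀ x : ι → ℂ, x ≠ 0 → (∀ i, hApp ℰ x i = (lam : ℂ) * x i ^ (m-1)) →
      ∃ (c : ℂ) (ω : ι → ℂ), c ≠ 0 ∧ (∀ v, ω v ^ m = 1) ∧ ∀ v, x v = c * z v * ω v := by
    intro x hx heig
    obtain ⟨t, ht0, hxle, i₀, hxi₀⟩ := hmax_ratio x hx
    have hstepA : ∀ i, lam * ‖x i‖ ^ (m-1)
        ≤ hApp ℰ (fun v => ‖x v‖) i := by
      intro i
      have h1 := abs_hApp_le (ℰ := ℰ) x i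
      rw [heig i, norm_mul, norm_pow, Complex.norm_of_nonneg hlampos.le] at h1
      exact h1
    have htz : ∀ i, hApp ℰ (fun v => t * z v) i = lam * (t * z i) ^ (m-1) := by
      intro i
      rw [hApp_smul hunif, hzeig i]; ring
    have hstep : ∀ a b : ι, ‖x a‖ = t * z a → (∃ e ∈ ℰ, a ∈ e ∧ b ∈ e) →
        ‖x b‖ = t * z b := by
      intro a b ha hrel
      obtain ⟨e, he, hae, hbe⟩ := hrel
      have h1 : hApp ℰ (fun v => ‖x v‖) a ≤ hApp ℰ (fun v => t * z v) a :=
        hApp_mono (fun v => norm_nonneg _) hxle a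
      have h3 : hApp ℰ (fun v => t * z v) a ≤ hApp ℰ (fun v => ‖x v‖) a := by
        rw [htz a, ← ha]
        exact hstepA a
      have heq2 : hApp ℰ (fun v => ‖x v‖) a = hApp ℰ (fun v => t * z v) a :=
        le_antisymm h1 h3
      have hterm : ∏ v ∈ e.erase a, ‖x v‖ = ∏ v ∈ e.erase a, (t * z v) := by
        by_contra hne2
        have hle2 : ∀ e' ∈ ℰ.filter (fun e => a ∈ e),
            ∏ v ∈ e'.erase a, ‖x v‖ ≤ ∏ v ∈ e'.erase a, (t * z v) :=
          fun e' _ => Finset.prod_le_prod (fun v _ => norm_nonneg _) (fun v _ => hxle v)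
        have hmem : e ∈ ℰ.filter (fun e => a ∈ e) := Finset.mem_filter.mpr ⟨he, hae⟩
        have hlt : hApp ℰ (fun v => ‖x v‖) a < hApp ℰ (fun v => t * z v) a := by
          rw [hApp, hApp]
          exact Finset.sum_lt_sum hle2 ⟨e, hmem, lt_of_le_of_ne (hle2 e hmem) hne2⟩
        rw [heq2] at hlt
        exact lt_irrefl _ hlt
      rcases eq_or_ne b a with rfl | hba
      · exact ha
      · exact prod_factors_eq (fun w _ => norm_nonneg _)
          (fun w _ => hxle w) (fun w _ => mul_pos ht0 (hzpos w)) hterm b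
          (Finset.mem_erase.mpr ⟨hba, hbe⟩)
    have habs : ∀ v, ‖x v‖ = t * z v :=
      conn_ind hconn (fun v => ‖x v‖ = t * z v) i₀ hxi₀ hstep
    have htzpos : ∀ v, (0:ℝ) < t * z v := fun v => mul_pos ht0 (hzpos v)
    have hxne : ∀ v, x v ≠ 0 := by
      intro v h0
      have h1 := habs v
      rw [h0, norm_zero] at h1
      exact absurd h1.symm (htzpos v).ne'
    set u : ι → ℂ := fun v => x v / ((t * z v : ℝ) : ℂ) with hu
    have htzC : ∀ v, ((t * z v : ℝ) : ℂ) ≠ 0 := fun v => by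
      exact_mod_cast (htzpos v).ne'
    have hxu : ∀ v, x v = ((t * z v : ℝ) : ℂ) * u v := fun v => by
      dsimp only [u]
      rw [mul_div_cancel₀ _ (htzC v)]
    have hune : ∀ v, u v ≠ 0 := fun v => by
      dsimp only [u]
      exact div_ne_zero (hxne v) (htzC v)
    have hphase : ∀ i, ∀ e ∈ ℰ, i ∈ e → ∏ v ∈ e, u v = u i ^ m := by
      intro i e he hie
      set σ : ℂ := x i ^ (m-1) with hσ
      have hσne : σ ≠ 0 := pow_ne_zero _ (hxne i)
      have hσabs : ‖σ‖ = (t * z i) ^ (m-1) := by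
        rw [hσ, norm_pow, habs i]
      set F : Finset ι → ℝ := fun e' => (∏ v ∈ e'.erase i, (t * z v)) * (t * z i) ^ (m-1)
        - ((∏ v ∈ e'.erase i, x v) * (starRingEnd ℂ) σ).re with hF
      have habs_gen : ∀ e' : Finset ι, ‖(∏ v ∈ e'.erase i, x v) * (starRingEnd ℂ) σ‖
          = (∏ v ∈ e'.erase i, (t * z v)) * (t * z i) ^ (m-1) := by
        intro e'
        rw [norm_mul, norm_prod, Complex.norm_conj, hσabs]
        congr 1
        exact Finset.prod_congr rfl fun v _ => habs v
      have hFnonneg : ∀ e' ∈ ℰ.filter (fun e => i ∈ e), 0 ≤ F e' := by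
        intro e' he'
        have h1 : ((∏ v ∈ e'.erase i, x v) * (starRingEnd ℂ) σ).re
            ≤ ‖(∏ v ∈ e'.erase i, x v) * (starRingEnd ℂ) σ‖ := Complex.re_le_norm _
        have h2 := habs_gen e'
        dsimp only [F]
        linarith [h2 ▸ h1]
      have hFsum : ∑ e' ∈ ℰ.filter (fun e => i ∈ e), F e' = 0 := by
        dsimp only [F]
        rw [Finset.sum_sub_distrib]
        have hA : ∑ e' ∈ ℰ.filter (fun e => i ∈ e),
            (∏ v ∈ e'.erase i, (t * z v)) * (t * z i) ^ (m-1)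
            = lam * (t * z i) ^ (m-1) * (t * z i) ^ (m-1) := by
          rw [← Finset.sum_mul]
          have hh : ∑ e' ∈ ℰ.filter (fun e => i ∈ e), ∏ v ∈ e'.erase i, (t * z v)
              = hApp ℰ (fun v => t * z v) i := rfl
          rw [hh, htz i]
        have hB2 : ∑ e' ∈ ℰ.filter (fun e => i ∈ e),
            ((∏ v ∈ e'.erase i, x v) * (starRingEnd ℂ) σ).re
            = lam * (t * z i) ^ (m-1) * (t * z i) ^ (m-1) := by
          rw [← Complex.re_sum, ← Finset.sum_mul]
          have hh : ∑ e' ∈ ℰ.filter (fun e => i ∈ e), ∏ v ∈ e'.erase i, x v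
              = hApp ℰ x i := rfl
          rw [hh, heig i, ← hσ, mul_assoc, Complex.mul_conj]
          have hns : Complex.normSq σ = ((t * z i) ^ (m-1)) ^ 2 := by
            rw [← Complex.sq_norm, hσabs]
          rw [hns]
          rw [← Complex.ofReal_mul]
          rw [Complex.ofReal_re]
          ring
        rw [hA, hB2, sub_self]
      have hFzero := (Finset.sum_eq_zero_iff_of_nonneg hFnonneg).mp hFsum
      have he' : e ∈ ℰ.filter (fun e => i ∈ e) := Finset.mem_filter.mpr ⟨he, hie⟩
      have hFe := hFzero e he'
      dsimp only [F] at hFe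
      set a_e : ℂ := ∏ v ∈ e.erase i, x v with ha_e
      set P : ℝ := ∏ v ∈ e.erase i, (t * z v) with hP
      have hPpos : 0 < P := Finset.prod_pos fun v _ => htzpos v
      have hre : (a_e * (starRingEnd ℂ) σ).re = ‖a_e * (starRingEnd ℂ) σ‖ := by
        rw [habs_gen e]
        dsimp only [a_e] at hFe ⊢
        linarith
      have hζ : a_e * (starRingEnd ℂ) σ = ((P * (t * z i) ^ (m-1) : ℝ) : ℂ) := by
        have h1 := complex_re_eq_abs hre
        rw [habs_gen e] at h1
        exact h1
      set W : ℂ := ((t * z i : ℝ) : ℂ) with hW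
      have hWne : W ≠ 0 := htzC i
      have hPne : (P : ℂ) ≠ 0 := by exact_mod_cast hPpos.ne'
      have hζ' : a_e * (starRingEnd ℂ) σ = (P : ℂ) * W ^ (m-1) := by
        rw [hζ, hW]
        push_cast
        ring
      have hσσ : σ * (starRingEnd ℂ) σ = W ^ (m-1) * W ^ (m-1) := by
        rw [Complex.mul_conj]
        have hns : Complex.normSq σ = ((t * z i) ^ (m-1)) ^ 2 := by
          rw [← Complex.sq_norm, hσabs]
        rw [hns, hW]
        push_cast
        ring
      have hprodu : ∏ v ∈ e, u v = (∏ v ∈ e, x v) / ∏ v ∈ e, ((t * z v : ℝ) : ℂ) := by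
        dsimp only [u]
        rw [Finset.prod_div_distrib]
      have hprodx : ∏ v ∈ e, x v = x i * a_e := (Finset.mul_prod_erase e x hie).symm
      have hprodW : ∏ v ∈ e, ((t * z v : ℝ) : ℂ) = W * (P : ℂ) := by
        rw [← Finset.mul_prod_erase e _ hie]
        congr 1
        rw [hP]
        push_cast
        rfl
      have hui : u i = x i / W := rfl
      have hXm : x i ^ m = x i * σ := by
        rw [hσ]
        have hm' : m = (m-1) + 1 := by omega
        rw [hm', pow_succ']
        simp only [Nat.add_sub_cancel]
      have hWm : W ^ m = W * W ^ (m-1) := by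
        have hm' : m = (m-1) + 1 := by omega
        rw [hm', pow_succ']
        simp only [Nat.add_sub_cancel]
      rw [hprodu, hprodx, hprodW, hui, div_pow, hXm, hWm]
      rw [div_eq_div_iff (mul_ne_zero hWne hPne) (mul_ne_zero hWne (pow_ne_zero _ hWne))]
      have hconjne : (starRingEnd ℂ) σ ≠ 0 := by
        simp only [ne_eq, map_eq_zero]
        exact hσne
      apply mul_right_cancel₀ hconjne
      linear_combination (x i * W * W ^ (m-1)) * hζ' - (x i * W * (P : ℂ)) * hσσ
    have hconst : ∀ v, u v ^ m = u i₀ ^ m := by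
      refine conn_ind hconn (fun v => u v ^ m = u i₀ ^ m) i₀ rfl ?_
      intro a b ha hrel
      obtain ⟨e, he, hae, hbe⟩ := hrel
      rw [← hphase b e he hbe, hphase a e he hae]
      exact ha
    refine ⟨(t : ℂ) * u i₀, fun v => u v / u i₀, ?_, ?_, ?_⟩
    · exact mul_ne_zero (by exact_mod_cast ht0.ne') (hune i₀)
    · intro v
      rw [div_pow, hconst v, div_self (pow_ne_zero _ (hune i₀))]
    · intro v
      show x v = (t:ℂ) * u i₀ * ((z v : ℝ):ℂ) * (u v / u i₀)
      rw [hxu v]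
      have hc : ((t * z v : ℝ) : ℂ) = (t : ℂ) * ((z v : ℝ) : ℂ) := by push_cast; ring
      rw [hc, div_eq_mul_inv]
      have h3 : u i₀ * (u i₀)⁻¹ = 1 := mul_inv_cancel₀ (hune i₀)
      calc (t:ℂ) * ((z v : ℝ):ℂ) * u v
          = (t:ℂ) * ((z v : ℝ):ℂ) * u v * (u i₀ * (u i₀)⁻¹) := by rw [h3, mul_one]
      _ = (t:ℂ) * u i₀ * ((z v : ℝ):ℂ) * (u v * (u i₀)⁻¹) := by ring
  exact ⟨lam, z, hlampos, hzpos, hzeig, hCW, hrig⟩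

/-- crude bound on eigenvalues of an adjacency-type form -/
lemma eig_bound {ℰ : Finset (Finset ι)} (hm : 2 ≤ m) (hunif : ∀ e ∈ ℰ, e.card = m)
    {μ : ℂ} {x : ι → ℂ} (hx : x ≠ 0) (heig : ∀ i, hApp ℰ x i = μ * x i ^ (m-1)) :
    ‖μ‖ ≤ ℰ.card := by
  obtain ⟨v₀, hv₀⟩ : ∃ v, x v ≠ 0 := by
    by_contra hall; push_neg at hall; exact hx (funext hall)
  obtain ⟨i₀, -, hi₀⟩ := Finset.exists_max_image Finset.univ (fun i => ‖x i‖)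
    ⟨v₀, Finset.mem_univ v₀⟩
  have hM : 0 < ‖x i₀‖ :=
    lt_of_lt_of_le (norm_pos_iff.mpr hv₀) (hi₀ v₀ (Finset.mem_univ v₀))
  have h1 : ‖hApp ℰ x i₀‖ ≤ (ℰ.card : ℝ) * ‖x i₀‖ ^ (m-1) := by
    refine le_trans (abs_hApp_le (ℰ := ℰ) x i₀) ?_
    have h2 : ∀ e ∈ ℰ.filter (fun e => i₀ ∈ e), ∏ v ∈ e.erase i₀, ‖x v‖
        ≤ ‖x i₀‖ ^ (m-1) := by
      intro e he
      rw [Finset.mem_filter] at he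
      have h3 : ∏ v ∈ e.erase i₀, ‖x v‖ ≤ ∏ _v ∈ e.erase i₀, ‖x i₀‖ :=
        Finset.prod_le_prod (fun v _ => norm_nonneg _) (fun v _ => hi₀ v (Finset.mem_univ v))
      rwa [Finset.prod_const, Finset.card_erase_of_mem he.2, hunif e he.1] at h3
    calc hApp ℰ (fun v => ‖x v‖) i₀
        ≤ ∑ _e ∈ ℰ.filter (fun e => i₀ ∈ e), ‖x i₀‖ ^ (m-1) :=
          Finset.sum_le_sum h2
    _ = ((ℰ.filter (fun e => i₀ ∈ e)).card : ℝ) * ‖x i₀‖ ^ (m-1) := by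
        rw [Finset.sum_const, nsmul_eq_mul]
    _ ≤ (ℰ.card : ℝ) * ‖x i₀‖ ^ (m-1) := by
        have hcf := Finset.card_filter_le ℰ (fun e => i₀ ∈ e)
        have hpow : (0:ℝ) ≤ ‖x i₀‖ ^ (m-1) := pow_nonneg (norm_nonneg _) _
        exact mul_le_mul_of_nonneg_right (by exact_mod_cast hcf) hpow
  rw [heig i₀, norm_mul, norm_pow] at h1
  exact le_of_mul_le_mul_right h1 (pow_pos hM _)

/-- spectral analysis of an adjacency-type tensor with connected support -/
theorem spec_of_adj (hm : 2 ≤ m) {B : Tensor ι m} {ℰ : Finset (Finset ι)}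
    (hB : IsAdj m B ℰ) (hunif : ∀ e ∈ ℰ, e.card = m) (hne : ℰ.Nonempty)
    (hconn : ∀ u w : ι, Relation.ReflTransGen (fun a b => ∃ e ∈ ℰ, a ∈ e ∧ b ∈ e) u w) :
    0 < specRad B ∧
    (∃ z : ι → ℝ, (∀ v, 0 < z v) ∧ IsEigPair B ((specRad B : ℝ) : ℂ) (fun v => (z v : ℂ)) ∧
      (∀ (x : ι → ℂ), x ≠ 0 → (∀ i, tApp B x i = ((specRad B : ℝ) : ℂ) * x i ^ (m-1)) →
        ∃ (c : ℂ) (ω : ι → ℂ), c ≠ 0 ∧ (∀ v, ω v ^ m = 1) ∧ ∀ v, x v = c * z v * ω v)) ∧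
    (∀ μ ∈ Eigenvalues B, ‖μ‖ ≤ specRad B) := by
  obtain ⟨lam, z, hlampos, hzpos, hzeig, hCW, hrig⟩ := PF_main hm ℰ hunif hne hconn
  have hT : ∀ (x : ι → ℂ) i, tApp B x i = hApp ℰ x i := fun x i => tApp_eq_hApp hB hunif hm x i
  have hzC : ∀ i, hApp ℰ (fun v => ((z v : ℝ) : ℂ)) i = ((lam : ℝ) : ℂ) * ((z i : ℝ) : ℂ) ^ (m-1) := by
    intro i
    rw [← hApp_cast, hzeig i]
    push_cast
    ring
  obtain ⟨e₀, he₀⟩ := hne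
  obtain ⟨a₁, ha₁⟩ : e₀.Nonempty := Finset.card_pos.mp (by rw [hunif e₀ he₀]; omega)
  have hzne : (fun v => ((z v : ℝ) : ℂ)) ≠ 0 := by
    intro h
    have h2 := congrFun h a₁
    simp only [Pi.zero_apply, Complex.ofReal_eq_zero] at h2
    exact (hzpos a₁).ne' h2
  have hpair : IsEigPair B ((lam : ℝ) : ℂ) (fun v => ((z v : ℝ) : ℂ)) :=
    ⟨hzne, fun i => by rw [hT, hzC i]⟩
  have hbdd : BddAbove ((fun z : ℂ => ‖z‖) '' Eigenvalues B) := by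
    refine ⟨(ℰ.card : ℝ), ?_⟩
    rintro r ⟨μ, ⟨x, hx, heig⟩, rfl⟩
    exact eig_bound hm hunif hx (fun i => by rw [← hT]; exact heig i)
  have hlamem : ((lam : ℝ) : ℂ) ∈ Eigenvalues B := ⟨_, hpair⟩
  have hle : lam ≤ specRad B := by
    have h4 := le_csSup hbdd (Set.mem_image_of_mem (fun z : ℂ => ‖z‖) hlamem)
    rwa [Complex.norm_of_nonneg hlampos.le] at h4
  have hge : specRad B ≤ lam := by
    apply csSup_le ⟨_, Set.mem_image_of_mem (fun z : ℂ => ‖z‖) hlamem⟩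
    rintro r ⟨μ, ⟨x, hx, heig⟩, rfl⟩
    exact hCW μ x hx (fun i => by rw [← hT]; exact heig i)
  have hspec : specRad B = lam := le_antisymm hge hle
  refine ⟨by rw [hspec]; exact hlampos, ⟨z, hzpos, ?_, ?_⟩, ?_⟩
  · rw [hspec]; exact hpair
  · intro x hx heig
    rw [hspec] at heig
    exact hrig x hx (fun i => by rw [← hT]; exact heig i)
  · rintro μ ⟨x, hx, heig⟩
    rw [hspec]
    exact hCW μ x hx (fun i => by rw [← hT]; exact heig i)

end Aux

section Comp
set_option linter.unusedSectionVars false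
set_option linter.unusedVariables false

variable {n m : ℕ}

abbrev cset (E : Finset (Finset (Fin n))) (i₀ : Fin n) : Set (Fin n) := {u | HConn E i₀ u}

lemma hconn_symm {E : Finset (Finset (Fin n))} {u w : Fin n} (h : HConn E u w) : HConn E w u :=
  (@Relation.ReflTransGen.stdSymm _ _ ⟨fun a b hab => by
    obtain ⟨e, he, ha, hb⟩ := hab
    exact ⟨e, he, hb, ha⟩⟩).symm _ _ h

lemma hconn_step {E : Finset (Finset (Fin n))} {e : Finset (Fin n)} (he : e ∈ E) {u w : Fin n}
    (hu : u ∈ e) (hw : w ∈ e) : HConn E u w :=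
  Relation.ReflTransGen.single ⟨e, he, hu, hw⟩

lemma edge_sub_comp {E : Finset (Finset (Fin n))} {i₀ : Fin n} {e : Finset (Fin n)} (he : e ∈ E)
    {v : Fin n} (hv : v ∈ e) (hvC : HConn E i₀ v) : ∀ w ∈ e, HConn E i₀ w :=
  fun w hw => Relation.ReflTransGen.trans hvC (hconn_step he hv hw)

lemma mem_cset_self (E : Finset (Finset (Fin n))) (i₀ : Fin n) : i₀ ∈ cset E i₀ :=
  Relation.ReflTransGen.refl

noncomputable def compE (E : Finset (Finset (Fin n))) (i₀ : Fin n) :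
    Finset (Finset (cset E i₀)) :=
  (E.filter (fun e => ∀ v ∈ e, HConn E i₀ v)).image
    (Finset.subtype (fun u => u ∈ cset E i₀))

lemma compE_unif {E : Finset (Finset (Fin n))} (hunif : ∀ e ∈ E, e.card = m) {i₀ : Fin n} :
    ∀ e' ∈ compE E i₀, e'.card = m := by
  intro e' he'
  obtain ⟨e, hef, rfl⟩ := Finset.mem_image.mp he'
  rw [Finset.mem_filter] at hef
  have hs : ∀ v ∈ e, v ∈ cset E i₀ := hef.2
  rw [Finset.card_subtype, Finset.filter_true_of_mem hs, hunif e hef.1]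

lemma mem_compE_iff {E : Finset (Finset (Fin n))} {i₀ : Fin n}
    (i : cset E i₀) (f : Fin (m-1) → cset E i₀) :
    insert (i : Fin n) (Finset.image (fun j => ((f j : Fin n))) Finset.univ) ∈ E ↔
      insert i (Finset.image f Finset.univ) ∈ compE E i₀ := by
  constructor
  · intro hmem
    refine Finset.mem_image.mpr ⟨insert (i : Fin n)
      (Finset.image (fun j => ((f j : Fin n))) Finset.univ),
      Finset.mem_filter.mpr ⟨hmem, ?_⟩, ?_⟩
    · intro v hv
      rcases Finset.mem_insert.mp hv with rfl | hv
      · exact i.2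
      · rcases Finset.mem_image.mp hv with ⟨j, -, rfl⟩
        exact (f j).2
    · ext ⟨v, hv⟩
      rw [Finset.mem_subtype]
      simp only [Finset.mem_insert, Finset.mem_image, Finset.mem_univ, true_and]
      constructor
      · rintro (rfl | ⟨j, hj⟩)
        · exact Or.inl (Subtype.ext rfl)
        · exact Or.inr ⟨j, Subtype.ext hj⟩
      · rintro (h | ⟨j, hj⟩)
        · exact Or.inl (congrArg Subtype.val h)
        · exact Or.inr ⟨j, congrArg Subtype.val hj⟩
  · intro hmem
    obtain ⟨e, hef, heq⟩ := Finset.mem_image.mp hmem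
    rw [Finset.mem_filter] at hef
    have hs : ∀ v ∈ e, v ∈ cset E i₀ := hef.2
    have h1 : (Finset.subtype (fun u => u ∈ cset E i₀) e).map
        (Function.Embedding.subtype _) = e := by
      rw [Finset.subtype_map, Finset.filter_true_of_mem hs]
    have h2 : e = insert (i : Fin n) (Finset.image (fun j => ((f j : Fin n))) Finset.univ) := by
      rw [← h1, heq, Finset.map_insert]
      congr 1
      rw [Finset.map_eq_image, Finset.image_image]
      rfl
    rw [← h2]
    exact hef.1

lemma restrict_isAdj (E : Finset (Finset (Fin n))) (i₀ : Fin n) :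
    IsAdj m (restrict (adjT n m E) (cset E i₀)) (compE E i₀) := by
  intro i f
  show (if insert (i : Fin n) (Finset.image (fun j => ((f j : Fin n))) Finset.univ) ∈ E
      then (1 : ℂ) / (Nat.factorial (m - 1)) else 0) = _
  exact if_congr (mem_compE_iff i f) rfl rfl

lemma compE_conn {E : Finset (Finset (Fin n))} {i₀ : Fin n} :
    ∀ u w : cset E i₀, Relation.ReflTransGen
      (fun a b => ∃ e ∈ compE E i₀, a ∈ e ∧ b ∈ e) u w := by
  have key : ∀ a b : Fin n, HConn E a b → ∀ (ha : a ∈ cset E i₀) (hb : b ∈ cset E i₀),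
      Relation.ReflTransGen (fun a b => ∃ e ∈ compE E i₀, a ∈ e ∧ b ∈ e) ⟨a, ha⟩ ⟨b, hb⟩ := by
    intro a b h
    induction h with
    | refl => intro ha hb; exact Relation.ReflTransGen.refl
    | @tail c d h1 h2 ih =>
      intro ha hd
      have hc : c ∈ cset E i₀ := Relation.ReflTransGen.trans ha h1
      obtain ⟨e, he, hce, hde⟩ := h2
      have hsub : ∀ v ∈ e, HConn E i₀ v := edge_sub_comp he hce hc
      refine (ih ha hc).tail ?_
      refine ⟨Finset.subtype _ e, ?_, ?_, ?_⟩
      · exact Finset.mem_image.mpr ⟨e, Finset.mem_filter.mpr ⟨he, hsub⟩, rfl⟩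
      · exact Finset.mem_subtype.mpr hce
      · exact Finset.mem_subtype.mpr hde
  intro u w
  have h : HConn E ↑u ↑w := Relation.ReflTransGen.trans (hconn_symm u.2) w.2
  have h2 := key ↑u ↑w h u.2 w.2
  exact h2

lemma hApp_comp {E : Finset (Finset (Fin n))} {i₀ : Fin n} (x : Fin n → ℂ) (i : cset E i₀) :
    hApp E x ↑i = hApp (compE E i₀) (fun v => x ↑v) i := by
  rw [hApp, hApp]
  refine Finset.sum_bij (fun e _ => Finset.subtype (fun u => u ∈ cset E i₀) e) ?_ ?_ ?_ ?_
  · intro e he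
    rw [Finset.mem_filter] at he
    have hsub : ∀ v ∈ e, v ∈ cset E i₀ := edge_sub_comp he.1 he.2 i.2
    rw [Finset.mem_filter]
    exact ⟨Finset.mem_image.mpr ⟨e, Finset.mem_filter.mpr ⟨he.1, hsub⟩, rfl⟩,
      Finset.mem_subtype.mpr he.2⟩
  · intro e₁ h₁ e₂ h₂ heq
    rw [Finset.mem_filter] at h₁ h₂
    have hs₁ : ∀ v ∈ e₁, v ∈ cset E i₀ := edge_sub_comp h₁.1 h₁.2 i.2
    have hs₂ : ∀ v ∈ e₂, v ∈ cset E i₀ := edge_sub_comp h₂.1 h₂.2 i.2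
    have h3 := congrArg (Finset.map (Function.Embedding.subtype (fun u => u ∈ cset E i₀))) heq
    rwa [Finset.subtype_map, Finset.subtype_map, Finset.filter_true_of_mem hs₁,
      Finset.filter_true_of_mem hs₂] at h3
  · intro e' he'
    rw [Finset.mem_filter] at he'
    obtain ⟨e, hef, heq⟩ := Finset.mem_image.mp he'.1
    rw [Finset.mem_filter] at hef
    refine ⟨e, Finset.mem_filter.mpr ⟨hef.1, ?_⟩, heq⟩
    have h4 := he'.2
    rw [← heq] at h4
    exact Finset.mem_subtype.mp h4
  · intro e he
    rw [Finset.mem_filter] at he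
    have hs : ∀ v ∈ e, v ∈ cset E i₀ := edge_sub_comp he.1 he.2 i.2
    have h1 : ((Finset.subtype (fun u => u ∈ cset E i₀) e).erase i).map
        (Function.Embedding.subtype _) = e.erase ↑i := by
      rw [Finset.map_erase, Finset.subtype_map, Finset.filter_true_of_mem hs]
      rfl
    rw [← h1, Finset.prod_map]
    rfl

noncomputable def extC (S : Set (Fin n)) (xc : S → ℂ) : Fin n → ℂ :=
  fun v => if h : v ∈ S then xc ⟨v, h⟩ else 0

lemma extC_mem {S : Set (Fin n)} (xc : S → ℂ) {v : Fin n} (h : v ∈ S) :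
    extC S xc v = xc ⟨v, h⟩ := dif_pos h

lemma extC_not {S : Set (Fin n)} (xc : S → ℂ) {v : Fin n} (h : v ∉ S) :
    extC S xc v = 0 := dif_neg h

lemma hApp_ext {E : Finset (Finset (Fin n))} {i₀ : Fin n} (xc : cset E i₀ → ℂ)
    (i : cset E i₀) :
    hApp E (extC (cset E i₀) xc) ↑i = hApp (compE E i₀) xc i := by
  rw [hApp_comp (extC (cset E i₀) xc) i]
  have hfun : (fun v : cset E i₀ => extC (cset E i₀) xc ↑v) = xc :=
    funext fun v => extC_mem xc v.2
  rw [hfun]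

lemma hApp_ext_zero (hm : 2 ≤ m) {E : Finset (Finset (Fin n))}
    (hunif : ∀ e ∈ E, e.card = m) {i₀ : Fin n}
    (xc : cset E i₀ → ℂ) {i : Fin n} (hi : i ∉ cset E i₀) :
    hApp E (extC (cset E i₀) xc) i = 0 := by
  rw [hApp]
  refine Finset.sum_eq_zero fun e he => ?_
  rw [Finset.mem_filter] at he
  obtain ⟨w, hw⟩ : (e.erase i).Nonempty := by
    rw [← Finset.card_pos, Finset.card_erase_of_mem he.2, hunif e he.1]
    omega
  refine Finset.prod_eq_zero hw (extC_not xc ?_)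
  intro hwC
  exact hi (Relation.ReflTransGen.trans hwC
    (hconn_symm (hconn_step he.1 he.2 (Finset.mem_of_mem_erase hw))))

lemma hApp_isolated (hm : 2 ≤ m) {E : Finset (Finset (Fin n))}
    (hunif : ∀ e ∈ E, e.card = m)
    {u : Fin n} (hsing : ¬ ∃ i', i' ≠ u ∧ HConn E u i') (x : Fin n → ℂ) :
    hApp E x u = 0 := by
  rw [hApp]
  refine Finset.sum_eq_zero fun e he => ?_
  rw [Finset.mem_filter] at he
  exfalso
  obtain ⟨b, hbe, hbne⟩ := Finset.exists_mem_ne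
    (by rw [hunif e he.1]; omega : 1 < e.card) u
  exact hsing ⟨b, hbne, hconn_step he.1 he.2 hbe⟩

lemma tApp_adjT {E : Finset (Finset (Fin n))} (hm : 2 ≤ m) (hunif : ∀ e ∈ E, e.card = m)
    (x : Fin n → ℂ) (i : Fin n) :
    tApp (adjT n m E) x i = hApp E x i :=
  tApp_eq_hApp (adjT_isAdj n m E) hunif hm x i

lemma tApp_restrict {E : Finset (Finset (Fin n))} (hm : 2 ≤ m) (hunif : ∀ e ∈ E, e.card = m)
    (i₀ : Fin n) (xc : cset E i₀ → ℂ) (i : cset E i₀) :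
    tApp (restrict (adjT n m E) (cset E i₀)) xc i = hApp (compE E i₀) xc i :=
  tApp_eq_hApp (restrict_isAdj E i₀) (compE_unif hunif) hm xc i

lemma compE_nonempty {E : Finset (Finset (Fin n))} (i₀ : Fin n)
    (hbig : ∃ i', i' ≠ i₀ ∧ HConn E i₀ i') : (compE E i₀).Nonempty := by
  obtain ⟨i', hne, hconn⟩ := hbig
  rcases Relation.ReflTransGen.cases_head hconn with h | ⟨c, hrel, -⟩
  · exact absurd h.symm hne
  · obtain ⟨e, he, hi₀e, -⟩ := hrel
    have hs : ∀ v ∈ e, v ∈ cset E i₀ := edge_sub_comp he hi₀e (mem_cset_self E i₀)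
    exact ⟨_, Finset.mem_image.mpr ⟨e, Finset.mem_filter.mpr ⟨he, hs⟩, rfl⟩⟩

lemma eig_extend {E : Finset (Finset (Fin n))} (hm : 2 ≤ m) (hunif : ∀ e ∈ E, e.card = m)
    {i₀ : Fin n} (μ : ℂ) (xc : cset E i₀ → ℂ) (hxc : xc ≠ 0)
    (heig : ∀ i, hApp (compE E i₀) xc i = μ * xc i ^ (m-1)) :
    IsEigPair (adjT n m E) μ (extC (cset E i₀) xc) := by
  constructor
  · obtain ⟨w, hw⟩ : ∃ w, xc w ≠ 0 := by
      by_contra hall; push_neg at hall; exact hxc (funext hall)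
    intro h0
    have h1 := congrFun h0 ↑w
    rw [extC_mem xc w.2] at h1
    exact hw h1
  · intro i
    rw [tApp_adjT hm hunif]
    by_cases hi : i ∈ cset E i₀
    · have h1 : hApp E (extC (cset E i₀) xc) i = hApp (compE E i₀) xc ⟨i, hi⟩ :=
        hApp_ext xc ⟨i, hi⟩
      rw [h1, heig ⟨i, hi⟩, extC_mem xc hi]
    · rw [hApp_ext_zero hm hunif xc hi, extC_not xc hi,
        zero_pow (by omega : m - 1 ≠ 0), mul_zero]

lemma eig_restrict {E : Finset (Finset (Fin n))} {μ : ℂ} {x : Fin n → ℂ}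
    (heig : ∀ i, hApp E x i = μ * x i ^ (m-1)) (i₀ : Fin n) (u : Fin n)
    (hu : x u ≠ 0) (huC : u ∈ cset E i₀) :
    (fun w : cset E i₀ => x ↑w) ≠ 0 ∧
    ∀ i : cset E i₀, hApp (compE E i₀) (fun w : cset E i₀ => x ↑w) i
      = μ * (x ↑i) ^ (m-1) := by
  constructor
  · intro h0
    exact hu (congrFun h0 ⟨u, huC⟩)
  · intro i
    rw [← hApp_comp x i]
    exact heig ↑i

end Comp

/-- For a disconnected `m`-uniform hypergraph `G` with at least one edge, `PV_ρ(A(G))` is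
infinite (has dimension greater than zero) iff `G` has at least two connected components,
each on at least two vertices, with spectral radius equal to `ρ`. -/
theorem stmt19 {n m : ℕ} (hm : 2 ≤ m) (E : Finset (Finset (Fin n)))
    (hunif : ∀ e ∈ E, e.card = m) (hE : E.Nonempty)
    (hdisc : ¬ ∀ u w : Fin n, HConn E u w) :
    (PV (adjT n m E) ((specRad (adjT n m E) : ℝ) : ℂ)).Infinite ↔
      ∃ i j : Fin n, ¬ HConn E i j ∧
        (∃ i' : Fin n, i' ≠ i ∧ HConn E i i') ∧
        (∃ j' : Fin n, j' ≠ j ∧ HConn E j j') ∧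
        specRad (restrict (adjT n m E) {u | HConn E i u}) = specRad (adjT n m E) ∧
        specRad (restrict (adjT n m E) {u | HConn E j u}) = specRad (adjT n m E) := by
  classical
  have hTA : ∀ (x : Fin n → ℂ) i, tApp (adjT n m E) x i = hApp E x i :=
    fun x i => tApp_adjT hm hunif x i
  have hbdd : BddAbove ((fun z : ℂ => ‖z‖) '' Eigenvalues (adjT n m E)) := by
    refine ⟨(E.card : ℝ), ?_⟩
    rintro r ⟨μ, ⟨x, hx, heig⟩, rfl⟩
    exact eig_bound hm hunif hx (fun i => by rw [← hTA]; exact heig i)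
  have hSPEC : ∀ i₀ : Fin n, (∃ i', i' ≠ i₀ ∧ HConn E i₀ i') →
      0 < specRad (restrict (adjT n m E) (cset E i₀)) ∧
      (∃ z : cset E i₀ → ℝ, (∀ v, 0 < z v) ∧
        IsEigPair (restrict (adjT n m E) (cset E i₀))
          ((specRad (restrict (adjT n m E) (cset E i₀)) : ℝ) : ℂ) (fun v => (z v : ℂ)) ∧
        (∀ (x : cset E i₀ → ℂ), x ≠ 0 →
          (∀ w, tApp (restrict (adjT n m E) (cset E i₀)) x w
            = ((specRad (restrict (adjT n m E) (cset E i₀)) : ℝ) : ℂ) * x w ^ (m-1)) →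
          ∃ (c : ℂ) (ω : cset E i₀ → ℂ), c ≠ 0 ∧ (∀ v, ω v ^ m = 1) ∧
            ∀ v, x v = c * z v * ω v)) ∧
      (∀ μ ∈ Eigenvalues (restrict (adjT n m E) (cset E i₀)),
        ‖μ‖ ≤ specRad (restrict (adjT n m E) (cset E i₀))) :=
    fun i₀ hbig => spec_of_adj hm (restrict_isAdj E i₀) (compE_unif hunif)
      (compE_nonempty i₀ hbig) compE_conn
  have hEXT : ∀ (i₀ : Fin n) (μ : ℂ), μ ∈ Eigenvalues (restrict (adjT n m E) (cset E i₀)) →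
      μ ∈ Eigenvalues (adjT n m E) := by
    rintro i₀ μ ⟨xc, hxc, heig⟩
    exact ⟨extC (cset E i₀) xc, eig_extend hm hunif μ xc hxc (fun w => by
      rw [← tApp_restrict hm hunif i₀ xc w]; exact heig w)⟩
  have hLE : ∀ i₀ : Fin n, (∃ i', i' ≠ i₀ ∧ HConn E i₀ i') →
      specRad (restrict (adjT n m E) (cset E i₀)) ≤ specRad (adjT n m E) := by
    intro i₀ hbig
    obtain ⟨hpos, ⟨z, hzpos, hzpair, -⟩, -⟩ := hSPEC i₀ hbig
    refine csSup_le ⟨_, Set.mem_image_of_mem (fun z : ℂ => ‖z‖) ⟨_, hzpair⟩⟩ ?_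
    rintro r ⟨μ, hμ, rfl⟩
    exact le_csSup hbdd (Set.mem_image_of_mem (fun z : ℂ => ‖z‖) (hEXT i₀ μ hμ))
  obtain ⟨e₁, he₁⟩ := hE
  obtain ⟨a₁, ha₁, b₁, hb₁, hab₁⟩ := Finset.one_lt_card.mp
    (by rw [hunif e₁ he₁]; omega : 1 < e₁.card)
  have hbig₁ : ∃ i', i' ≠ a₁ ∧ HConn E a₁ i' := ⟨b₁, Ne.symm hab₁, hconn_step he₁ ha₁ hb₁⟩
  have hρpos : 0 < specRad (adjT n m E) := by
    obtain ⟨hpos, ⟨z, hzpos, hzpair, -⟩, -⟩ := hSPEC a₁ hbig₁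
    have h1 : ((specRad (restrict (adjT n m E) (cset E a₁)) : ℝ) : ℂ)
        ∈ Eigenvalues (adjT n m E) := hEXT a₁ _ ⟨_, hzpair⟩
    have h2 := le_csSup hbdd (Set.mem_image_of_mem (fun z : ℂ => ‖z‖) h1)
    rw [Complex.norm_of_nonneg hpos.le] at h2
    exact lt_of_lt_of_le hpos h2
  have hρC : ((specRad (adjT n m E) : ℝ) : ℂ) ≠ 0 := by
    simp only [ne_eq, Complex.ofReal_eq_zero]
    exact hρpos.ne'
  have hSUPP : ∀ (x : Fin n → ℂ),
      (∀ w, hApp E x w = ((specRad (adjT n m E) : ℝ) : ℂ) * x w ^ (m-1)) →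
      ∀ u, x u ≠ 0 → (∃ i', i' ≠ u ∧ HConn E u i') ∧
        specRad (restrict (adjT n m E) (cset E u)) = specRad (adjT n m E) := by
    intro x heig u hu
    have hbig : ∃ i', i' ≠ u ∧ HConn E u i' := by
      by_contra hsing
      have h0 := hApp_isolated hm hunif hsing x
      rw [heig u] at h0
      rcases mul_eq_zero.mp h0 with h | h
      · exact hρC h
      · exact hu (pow_eq_zero_iff (by omega : m - 1 ≠ 0) |>.mp h)
    refine ⟨hbig, ?_⟩
    obtain ⟨hxcne, hxceig⟩ := eig_restrict heig u u hu (mem_cset_self E u)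
    have hmem : ((specRad (adjT n m E) : ℝ) : ℂ)
        ∈ Eigenvalues (restrict (adjT n m E) (cset E u)) := by
      refine ⟨fun w : cset E u => x ↑w, hxcne, fun w => ?_⟩
      rw [tApp_restrict hm hunif u _ w]
      exact hxceig w
    obtain ⟨hpos, -, hCW⟩ := hSPEC u hbig
    have h1 := hCW _ hmem
    rw [Complex.norm_of_nonneg hρpos.le] at h1
    exact le_antisymm (hLE u hbig) h1
  constructor
  · -- forward direction
    intro hinf
    by_contra hnR
    obtain ⟨p₀, hp₀⟩ := hinf.nonempty
    obtain ⟨x₀, hx₀ne, hmk₀, heig₀T⟩ := hp₀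
    have heig₀ : ∀ w, hApp E x₀ w = ((specRad (adjT n m E) : ℝ) : ℂ) * x₀ w ^ (m-1) :=
      fun w => by rw [← hTA]; exact heig₀T w
    obtain ⟨u₀, hu₀⟩ := Function.ne_iff.mp hx₀ne
    obtain ⟨hbig₀, hspec₀⟩ := hSUPP x₀ heig₀ u₀ hu₀
    have hsupp : ∀ (x : Fin n → ℂ),
        (∀ w, hApp E x w = ((specRad (adjT n m E) : ℝ) : ℂ) * x w ^ (m-1)) →
        ∀ u, x u ≠ 0 → u ∈ cset E u₀ := by
      intro x heig u hu
      by_contra hnc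
      obtain ⟨hbigu, hspecu⟩ := hSUPP x heig u hu
      exact hnR ⟨u₀, u, hnc, hbig₀, hbigu, hspec₀, hspecu⟩
    obtain ⟨hpos0, ⟨z, hzpos, hzpair, hrigid⟩, -⟩ := hSPEC u₀ hbig₀
    have hΩfin : {ω : cset E u₀ → ℂ | ∀ w, ω w ^ m = 1}.Finite := by
      have hroot : {c : ℂ | c ^ m = 1}.Finite := by
        refine Set.Finite.subset (Polynomial.nthRoots m (1:ℂ)).toFinset.finite_toSet ?_
        intro c hc
        simp only [Finset.mem_coe, Multiset.mem_toFinset]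
        rw [Polynomial.mem_nthRoots (by omega : 0 < m)]
        exact hc
      refine (Set.Finite.pi (fun _ : cset E u₀ => hroot)).subset ?_
      intro ω hω w _
      exact hω w
    set F : (cset E u₀ → ℂ) → Projectivization ℂ (Fin n → ℂ) := fun ω =>
      if h : extC (cset E u₀) (fun w => ((z w : ℝ) : ℂ) * ω w) ≠ 0
      then Projectivization.mk ℂ _ h else p₀ with hF
    have hsub2 : PV (adjT n m E) ((specRad (adjT n m E) : ℝ) : ℂ)
        ⊆ F '' {ω : cset E u₀ → ℂ | ∀ w, ω w ^ m = 1} := by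
      rintro p ⟨x, hxne, hmk, heigT⟩
      have heig : ∀ w, hApp E x w = ((specRad (adjT n m E) : ℝ) : ℂ) * x w ^ (m-1) :=
        fun w => by rw [← hTA]; exact heigT w
      obtain ⟨u, hu⟩ := Function.ne_iff.mp hxne
      have huC : u ∈ cset E u₀ := hsupp x heig u hu
      obtain ⟨hxcne, hxceig⟩ := eig_restrict heig u₀ u hu huC
      obtain ⟨c, ω, hc, hω, hxc⟩ := hrigid _ hxcne (fun w => by
        rw [tApp_restrict hm hunif u₀ _ w, hspec₀]
        exact hxceig w)
      refine ⟨ω, hω, ?_⟩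
      have hext_ne : extC (cset E u₀) (fun w => ((z w : ℝ) : ℂ) * ω w) ≠ 0 := by
        intro h0
        have h1 := congrFun h0 u₀
        rw [extC_mem _ (mem_cset_self E u₀)] at h1
        rcases mul_eq_zero.mp h1 with h | h
        · exact absurd (Complex.ofReal_eq_zero.mp h) (hzpos _).ne'
        · have h2 := hω ⟨u₀, mem_cset_self E u₀⟩
          rw [h, zero_pow (by omega : m ≠ 0)] at h2
          exact zero_ne_one h2
      have hxeq : x = c • extC (cset E u₀) (fun w => ((z w : ℝ) : ℂ) * ω w) := by
        funext v
        by_cases hv : v ∈ cset E u₀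
        · rw [Pi.smul_apply, smul_eq_mul, extC_mem _ hv]
          have h6 : x v = c * ((z ⟨v, hv⟩ : ℝ) : ℂ) * ω ⟨v, hv⟩ := hxc ⟨v, hv⟩
          rw [h6]
          ring
        · have hxv : x v = 0 := by
            by_contra hxv
            exact hv (hsupp x heig v hxv)
          rw [Pi.smul_apply, smul_eq_mul, extC_not _ hv, hxv, mul_zero]
      show F ω = p
      rw [hF]
      dsimp only
      rw [dif_pos hext_ne, ← hmk, Projectivization.mk_eq_mk_iff]
      refine ⟨(Units.mk0 c hc)⁻¹, ?_⟩
      rw [hxeq, show c • extC (cset E u₀) (fun w => ((z w : ℝ) : ℂ) * ω w)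
          = (Units.mk0 c hc) • extC (cset E u₀) (fun w => ((z w : ℝ) : ℂ) * ω w) from rfl,
        inv_smul_smul]
    exact hinf ((hΩfin.image F).subset hsub2)
  · -- reverse direction
    rintro ⟨i, j, hnconn, hbig_i, hbig_j, hspec_i, hspec_j⟩
    obtain ⟨hpos_i, ⟨z1, hz1pos, hz1pair, -⟩, -⟩ := hSPEC i hbig_i
    obtain ⟨hpos_j, ⟨z2, hz2pos, hz2pair, -⟩, -⟩ := hSPEC j hbig_j
    rw [hspec_i] at hz1pair
    rw [hspec_j] at hz2pair
    have pair1 : IsEigPair (adjT n m E) ((specRad (adjT n m E) : ℝ) : ℂ)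
        (extC (cset E i) (fun v => ((z1 v : ℝ) : ℂ))) :=
      eig_extend hm hunif _ _ hz1pair.1 (fun w => by
        rw [← tApp_restrict hm hunif i _ w]; exact hz1pair.2 w)
    have pair2 : IsEigPair (adjT n m E) ((specRad (adjT n m E) : ℝ) : ℂ)
        (extC (cset E j) (fun v => ((z2 v : ℝ) : ℂ))) :=
      eig_extend hm hunif _ _ hz2pair.1 (fun w => by
        rw [← tApp_restrict hm hunif j _ w]; exact hz2pair.2 w)
    set x1 : Fin n → ℂ := extC (cset E i) (fun v => ((z1 v : ℝ) : ℂ)) with hx1def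
    set x2 : Fin n → ℂ := extC (cset E j) (fun v => ((z2 v : ℝ) : ℂ)) with hx2def
    have hx1eig : ∀ v, hApp E x1 v = ((specRad (adjT n m E) : ℝ) : ℂ) * x1 v ^ (m-1) :=
      fun v => by rw [← hTA]; exact pair1.2 v
    have hx2eig : ∀ v, hApp E x2 v = ((specRad (adjT n m E) : ℝ) : ℂ) * x2 v ^ (m-1) :=
      fun v => by rw [← hTA]; exact pair2.2 v
    have hdisj : ∀ v, v ∈ cset E i → v ∈ cset E j → False := fun v hvi hvj =>
      hnconn (Relation.ReflTransGen.trans hvi (hconn_symm hvj))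
    have hx1i : x1 i ≠ 0 := by
      rw [hx1def, extC_mem _ (mem_cset_self E i)]
      simp only [ne_eq, Complex.ofReal_eq_zero]
      exact (hz1pos _).ne'
    have hx2j : x2 j ≠ 0 := by
      rw [hx2def, extC_mem _ (mem_cset_self E j)]
      simp only [ne_eq, Complex.ofReal_eq_zero]
      exact (hz2pos _).ne'
    have hx2i : x2 i = 0 := extC_not _ (fun h => hdisj i (mem_cset_self E i) h)
    have hx1j : x1 j = 0 := extC_not _ (fun h => hdisj j h (mem_cset_self E j))
    set Y : ℂ → Fin n → ℂ := fun t v => x1 v + t * x2 v with hYdef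
    have hYeig : ∀ (t : ℂ) v, hApp E (Y t) v
        = ((specRad (adjT n m E) : ℝ) : ℂ) * (Y t v) ^ (m-1) := by
      intro t v
      by_cases hvi : v ∈ cset E i
      · have hcongr : hApp E (Y t) v = hApp E x1 v := by
          refine hApp_congr v (fun e he hve w hwe => ?_)
          have hwC : w ∈ cset E i := edge_sub_comp he hve hvi w hwe
          show x1 w + t * x2 w = x1 w
          rw [hx2def, extC_not _ (fun h => hdisj w hwC h), mul_zero, add_zero]
        have hYv : Y t v = x1 v := by
          show x1 v + t * x2 v = x1 v
          rw [hx2def, extC_not _ (fun h => hdisj v hvi h), mul_zero, add_zero]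
        rw [hcongr, hx1eig v, hYv]
      by_cases hvj : v ∈ cset E j
      · have hcongr : hApp E (Y t) v = hApp E (fun w => t * x2 w) v := by
          refine hApp_congr v (fun e he hve w hwe => ?_)
          have hwC : w ∈ cset E j := edge_sub_comp he hve hvj w hwe
          show x1 w + t * x2 w = t * x2 w
          rw [hx1def, extC_not _ (fun h => hdisj w h hwC), zero_add]
        have hYv : Y t v = t * x2 v := by
          show x1 v + t * x2 v = t * x2 v
          rw [hx1def, extC_not _ (fun h => hdisj v h hvj), zero_add]
        rw [hcongr, hApp_smul hunif t x2 v, hx2eig v, hYv, mul_pow]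
        ring
      · have h0 : hApp E (Y t) v = 0 := by
          rw [hApp]
          refine Finset.sum_eq_zero fun e he => ?_
          rw [Finset.mem_filter] at he
          obtain ⟨w, hw⟩ : (e.erase v).Nonempty := by
            rw [← Finset.card_pos, Finset.card_erase_of_mem he.2, hunif e he.1]; omega
          refine Finset.prod_eq_zero hw ?_
          have hwe := Finset.mem_of_mem_erase hw
          have hwv : HConn E v w := hconn_step he.1 he.2 hwe
          have hw1 : x1 w = 0 := extC_not _
            (fun h => hvi (Relation.ReflTransGen.trans h (hconn_symm hwv)))
          have hw2 : x2 w = 0 := extC_not _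
            (fun h => hvj (Relation.ReflTransGen.trans h (hconn_symm hwv)))
          show x1 w + t * x2 w = 0
          rw [hw1, hw2, mul_zero, add_zero]
        have hYv : Y t v = 0 := by
          show x1 v + t * x2 v = 0
          rw [hx1def, extC_not _ hvi, hx2def, extC_not _ hvj, mul_zero, add_zero]
        rw [h0, hYv, zero_pow (by omega : m-1 ≠ 0), mul_zero]
    have hYne : ∀ t, Y t ≠ 0 := by
      intro t h0
      have h1 := congrFun h0 i
      have h2 : x1 i + t * x2 i = 0 := h1
      rw [hx2i, mul_zero, add_zero] at h2
      exact hx1i h2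
    have hmem : ∀ t : ℂ, Projectivization.mk ℂ (Y t) (hYne t)
        ∈ PV (adjT n m E) ((specRad (adjT n m E) : ℝ) : ℂ) := fun t =>
      ⟨Y t, hYne t, rfl, fun v => by rw [hTA]; exact hYeig t v⟩
    have hinj : Function.Injective (fun t : ℂ => Projectivization.mk ℂ (Y t) (hYne t)) := by
      intro s t hst
      simp only [Projectivization.mk_eq_mk_iff] at hst
      obtain ⟨a, ha⟩ := hst
      have h1 : (a : ℂ) * Y t i = Y s i := congrFun ha i
      have hYti : Y t i = x1 i := by
        show x1 i + t * x2 i = x1 i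
        rw [hx2i, mul_zero, add_zero]
      have hYsi : Y s i = x1 i := by
        show x1 i + s * x2 i = x1 i
        rw [hx2i, mul_zero, add_zero]
      rw [hYti, hYsi] at h1
      have ha1 : (a : ℂ) = 1 := mul_right_cancel₀ hx1i (by rw [h1, one_mul])
      have h3 : (a : ℂ) * Y t j = Y s j := congrFun ha j
      rw [ha1, one_mul] at h3
      have hYtj : Y t j = t * x2 j := by
        show x1 j + t * x2 j = t * x2 j
        rw [hx1j, zero_add]
      have hYsj : Y s j = s * x2 j := by
        show x1 j + s * x2 j = s * x2 j
        rw [hx1j, zero_add]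
      rw [hYtj, hYsj] at h3
      exact (mul_right_cancel₀ hx2j h3).symm
    exact Set.infinite_of_injective_forall_mem hinj hmem

end PaperTensor
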